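/- arXiv:1205.6024 — 3 statements merged into one kernel-verified Lean document; each statement's English description precedes it below -/
import Mathlib

section
/- Independent influence is dominated by unconditional influence: for a seed set S, a node k ∉ S, and any node j, the independent influence f_{kj}^{(S)} = (Γ_{S̄S̄}⁻¹)_{jk} / (Γ_{S̄S̄}⁻¹)_{kk} satisfies f_{kj}^{(S)} ≤ f_{kj} = p_{jk}/p_{kk}. -/
open Finset Matrix

noncomputable def indInf {n : ℕ} (Γ : Matrix (Fin n) (Fin n) ℝ) (S : Finset (Fin n))
    (k j : Fin n) : ℝ :=
  if h : k ∉ S ∧ j ∉ S then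
    ((Γ.submatrix (Subtype.val : {i : Fin n // i ∉ S} → Fin n) (Subtype.val : {i : Fin n // i ∉ S} → Fin n))⁻¹
        ⟨j, h.2⟩ ⟨k, h.1⟩) /
    ((Γ.submatrix (Subtype.val : {i : Fin n // i ∉ S} → Fin n) (Subtype.val : {i : Fin n // i ∉ S} → Fin n))⁻¹
        ⟨k, h.1⟩ ⟨k, h.1⟩)
  else 0

section aux
variable {ι : Type*} [Fintype ι] [DecidableEq ι]

omit [DecidableEq ι] in
lemma minPrinciple (A : Matrix ι ι ℝ)
    (hoff : ∀ i j, i ≠ j → A i j ≤ 0)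
    (hrow : ∀ i, 0 < ∑ j, A i j)
    (K : Set ι) (w : ι → ℝ)
    (h1 : ∀ i, i ∉ K → 0 ≤ A.mulVec w i)
    (h2 : ∀ i ∈ K, 0 ≤ w i) : ∀ j, 0 ≤ w j := by
  by_contra h
  push_neg at h
  obtain ⟨j0, hj0⟩ := h
  obtain ⟨m, -, hm⟩ := Finset.exists_min_image Finset.univ w ⟨j0, mem_univ _⟩
  have hwm : w m < 0 := lt_of_le_of_lt (hm j0 (mem_univ _)) hj0
  have hmK : m ∉ K := fun hmem => absurd (h2 m hmem) (not_le.2 hwm)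
  have hge := h1 m hmK
  have hle : A.mulVec w m ≤ (∑ j, A m j) * w m := by
    rw [Matrix.mulVec, dotProduct, Finset.sum_mul]
    apply Finset.sum_le_sum
    intro i _
    rcases eq_or_ne m i with rfl | hne
    · exact le_refl _
    · exact mul_le_mul_of_nonpos_left (hm i (mem_univ _)) (hoff m i hne)
  nlinarith [hrow m]

lemma zmat_isUnit (A : Matrix ι ι ℝ)
    (hoff : ∀ i j, i ≠ j → A i j ≤ 0)
    (hrow : ∀ i, 0 < ∑ j, A i j) : IsUnit A := by
  rw [← Matrix.mulVec_injective_iff_isUnit]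
  intro x y hxy
  have hz : A.mulVec (x - y) = 0 := by
    rw [Matrix.mulVec_sub, hxy, sub_self]
  have h1 : ∀ j, 0 ≤ (x - y) j :=
    minPrinciple A hoff hrow ∅ _ (fun i _ => by rw [hz]; exact le_refl 0) (by simp)
  have h2 : ∀ j, 0 ≤ (y - x) j := by
    refine minPrinciple A hoff hrow ∅ _ (fun i _ => ?_) (by simp)
    rw [show y - x = -(x - y) by ring, Matrix.mulVec_neg, hz]
    simp
  funext j
  have := h1 j; have := h2 j
  simp only [Pi.sub_apply] at *
  linarith

lemma zmat_inv_nonneg (A : Matrix ι ι ℝ)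
    (hoff : ∀ i j, i ≠ j → A i j ≤ 0)
    (hrow : ∀ i, 0 < ∑ j, A i j) : ∀ i j, 0 ≤ A⁻¹ i j := by
  have hu : IsUnit A.det := (Matrix.isUnit_iff_isUnit_det A).1 (zmat_isUnit A hoff hrow)
  intro i j
  have hcol : ∀ i', 0 ≤ (fun l => A⁻¹ l j) i' := by
    refine minPrinciple A hoff hrow ∅ _ (fun i' _ => ?_) (by simp)
    have : A.mulVec (fun l => A⁻¹ l j) i' = (A * A⁻¹) i' j := by
      simp [Matrix.mulVec, dotProduct, Matrix.mul_apply]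
    rw [this, Matrix.mul_nonsing_inv A hu]
    by_cases h : i' = j <;> simp [Matrix.one_apply, h]
  exact hcol i

lemma zmat_inv_diag_pos (A : Matrix ι ι ℝ)
    (hoff : ∀ i j, i ≠ j → A i j ≤ 0)
    (hrow : ∀ i, 0 < ∑ j, A i j) : ∀ k, 0 < A⁻¹ k k := by
  intro k
  have hu : IsUnit A.det := (Matrix.isUnit_iff_isUnit_det A).1 (zmat_isUnit A hoff hrow)
  have hnn := zmat_inv_nonneg A hoff hrow
  have h1 : (1 : ℝ) = ∑ l, A k l * A⁻¹ l k := by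
    have := Matrix.mul_nonsing_inv A hu
    have h := congrFun (congrFun this k) k
    rw [Matrix.mul_apply] at h
    simp [Matrix.one_apply] at h
    linarith [h]
  have hAkk : 0 < A k k := by
    have : ∑ j, A k j ≤ A k k := by
      have := Finset.sum_le_sum (s := Finset.univ.erase k)
        (f := fun j => A k j) (g := fun _ => (0:ℝ))
        (fun j hj => hoff k j (fun h => (Finset.mem_erase.1 hj).1 h.symm))
      rw [← Finset.add_sum_erase _ _ (mem_univ k)]
      simpa using this
    linarith [hrow k]
  by_contra hle
  push_neg at hle
  have hsum : ∑ l, A k l * A⁻¹ l k ≤ A k k * A⁻¹ k k := by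
    rw [← Finset.add_sum_erase _ _ (mem_univ k)]
    have : ∑ l ∈ Finset.univ.erase k, A k l * A⁻¹ l k ≤ 0 :=
      Finset.sum_nonpos (fun l hl =>
        mul_nonpos_of_nonpos_of_nonneg
          (hoff k l (fun h => (Finset.mem_erase.1 hl).1 h.symm)) (hnn l k))
    linarith
  nlinarith [mul_nonpos_of_nonneg_of_nonpos (le_of_lt hAkk) hle]

end aux

/-- Independent influence is dominated by unconditional influence:
`f_{kj}^{(S)} ≤ f_{kj} = p_{jk}/p_{kk}`. -/
theorem stmt_7 (n : ℕ) (T : Matrix (Fin n) (Fin n) ℝ) (lam : Fin n → ℝ)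
    (hT : ∀ i j, 0 ≤ T i j) (hcol : ∀ i, (∑ j, T j i) ≤ 1)
    (hlam : ∀ i, 0 < lam i)
    (P : Matrix (Fin n) (Fin n) ℝ)
    (hinv : IsUnit (1 + Matrix.diagonal lam - Tᵀ))
    (hP : P = (1 + Matrix.diagonal lam - Tᵀ)⁻¹)
    (S : Finset (Fin n)) (k : Fin n) (hk : k ∉ S) :
    ∀ j, indInf (1 + Matrix.diagonal lam - Tᵀ) S k j ≤ P j k / P k k := by
  set Γ : Matrix (Fin n) (Fin n) ℝ := 1 + Matrix.diagonal lam - Tᵀ with hΓdef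
  have hΓapp : ∀ i j, Γ i j = (if i = j then 1 + lam i else 0) - T j i := by
    intro i j
    simp [hΓdef, Matrix.sub_apply, Matrix.add_apply, Matrix.one_apply,
      Matrix.diagonal_apply, Matrix.transpose_apply]
    by_cases h : i = j <;> simp [h]
  have hoff : ∀ i j, i ≠ j → Γ i j ≤ 0 := by
    intro i j hij
    rw [hΓapp, if_neg hij]
    simpa using hT j i
  have hrow : ∀ i, 0 < ∑ j, Γ i j := by
    intro i
    have : ∑ j, Γ i j = (1 + lam i) - ∑ j, T j i := by
      simp only [hΓapp, Finset.sum_sub_distrib, Finset.sum_ite_eq, mem_univ, if_pos]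
    rw [this]
    have := hcol i
    have := hlam i
    linarith
  have hdet : IsUnit Γ.det := (Matrix.isUnit_iff_isUnit_det Γ).1 hinv
  have hGnn := zmat_inv_nonneg Γ hoff hrow
  have hGkk : 0 < Γ⁻¹ k k := zmat_inv_diag_pos Γ hoff hrow k
  -- the submatrix
  set A : Matrix {i : Fin n // i ∉ S} {i : Fin n // i ∉ S} ℝ :=
    Γ.submatrix Subtype.val Subtype.val with hAdef
  have hoffA : ∀ i j, i ≠ j → A i j ≤ 0 := by
    intro i j hij
    exact hoff i.val j.val (fun h => hij (Subtype.ext h))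
  have hsum_subtype : ∀ f : Fin n → ℝ, ∑ j ∈ Sᶜ, f j = ∑ j : {i : Fin n // i ∉ S}, f j.val := by
    intro f
    exact Finset.sum_subtype Sᶜ (fun x => Finset.mem_compl) f
  have hrowA : ∀ i, 0 < ∑ j, A i j := by
    intro i
    have h1 : ∑ j, A i j = ∑ j ∈ Sᶜ, Γ i.val j := by
      rw [hsum_subtype (fun j => Γ i.val j)]
      rfl
    have h2 : ∑ j ∈ S, Γ i.val j ≤ 0 :=
      Finset.sum_nonpos (fun j hj => hoff i.val j (fun h => i.2 (h ▸ hj)))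
    have h3 : ∑ j ∈ S, Γ i.val j + ∑ j ∈ Sᶜ, Γ i.val j = ∑ j, Γ i.val j :=
      Finset.sum_add_sum_compl S _
    have := hrow i.val
    rw [h1]; linarith
  have hAdet : IsUnit A.det := (Matrix.isUnit_iff_isUnit_det A).1 (zmat_isUnit A hoffA hrowA)
  have hAnn := zmat_inv_nonneg A hoffA hrowA
  set k' : {i : Fin n // i ∉ S} := ⟨k, hk⟩ with hk'def
  have hAkk : 0 < A⁻¹ k' k' := zmat_inv_diag_pos A hoffA hrowA k'
  -- vectors
  set u : Fin n → ℝ := fun i => Γ⁻¹ i k / Γ⁻¹ k k with hudef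
  set v : Fin n → ℝ :=
    fun i => if h : i ∉ S then A⁻¹ ⟨i, h⟩ k' / A⁻¹ k' k' else 0 with hvdef
  have hvnn : ∀ i, 0 ≤ v i := by
    intro i
    by_cases h : i ∉ S
    · simp only [hvdef, dif_pos h]
      exact div_nonneg (hAnn _ _) (le_of_lt hAkk)
    · have : v i = 0 := by simp only [hvdef]; rw [dif_neg h]
      rw [this]
  have hmu : ∀ i, i ≠ k → ∑ j, Γ i j * u j = 0 := by
    intro i hik
    have : ∑ j, Γ i j * u j = (∑ j, Γ i j * Γ⁻¹ j k) / Γ⁻¹ k k := by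
      rw [Finset.sum_div]
      exact Finset.sum_congr rfl (fun j _ => by rw [hudef, mul_div_assoc])
    rw [this, ← Matrix.mul_apply, Matrix.mul_nonsing_inv Γ hdet,
      Matrix.one_apply_ne hik, zero_div]
  have hmv : ∀ i, ∑ j, Γ i j * v j = ∑ j : {i : Fin n // i ∉ S},
      Γ i j.val * (A⁻¹ j k' / A⁻¹ k' k') := by
    intro i
    have step1 : ∑ j, Γ i j * v j = ∑ j ∈ Sᶜ, Γ i j * v j := by
      refine (Finset.sum_subset (Finset.subset_univ Sᶜ) ?_).symm
      intro x _ hx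
      have hxS : ¬ x ∉ S := by simpa using hx
      have : v x = 0 := by simp only [hvdef]; rw [dif_neg hxS]
      rw [this, mul_zero]
    rw [step1, hsum_subtype (fun j => Γ i j * v j)]
    refine Finset.sum_congr rfl (fun x _ => ?_)
    have : v x.val = A⁻¹ x k' / A⁻¹ k' k' := by
      simp only [hvdef]
      rw [dif_pos x.2]
    rw [this]
  have hw : ∀ j, 0 ≤ (fun i => u i - v i) j := by
    apply minPrinciple Γ hoff hrow {k}
    · intro i hiK
      have hik : i ≠ k := by simpa using hiK
      have hmvi := hmv i
      have : Γ.mulVec (fun i => u i - v i) i = ∑ j, Γ i j * u j - ∑ j, Γ i j * v j := by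
        simp [Matrix.mulVec, dotProduct, mul_sub, Finset.sum_sub_distrib]
      rw [this, hmu i hik]
      by_cases hiS : i ∉ S
      · have : ∑ j, Γ i j * v j = 0 := by
          rw [hmvi]
          have : ∀ j : {i : Fin n // i ∉ S},
              Γ i j.val * (A⁻¹ j k' / A⁻¹ k' k') = (A ⟨i, hiS⟩ j * A⁻¹ j k') / A⁻¹ k' k' := by
            intro j; rw [mul_div_assoc]; rfl
          rw [Finset.sum_congr rfl (fun j _ => this j), ← Finset.sum_div,
            ← Matrix.mul_apply, Matrix.mul_nonsing_inv A hAdet]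
          have hne : (⟨i, hiS⟩ : {i : Fin n // i ∉ S}) ≠ k' :=
            fun h => hik (congrArg Subtype.val h)
          rw [Matrix.one_apply_ne hne, zero_div]
        rw [this]; linarith
      · have : ∑ j, Γ i j * v j ≤ 0 := by
          rw [hmvi]
          apply Finset.sum_nonpos
          intro j _
          apply mul_nonpos_of_nonpos_of_nonneg
          · exact hoff i j.val (fun h => j.2 (by rw [← h]; simpa using hiS))
          · exact div_nonneg (hAnn _ _) (le_of_lt hAkk)
        linarith
    · intro i hi
      have hik : i = k := by simpa using hi
      subst hik
      have hu1 : u i = 1 := div_self (ne_of_gt hGkk)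
      have hv1 : v i = 1 := by
        simp only [hvdef, dif_pos hk]
        exact div_self (ne_of_gt hAkk)
      simp [hu1, hv1]
  -- conclude
  intro j
  rw [hP]
  by_cases hjS : j ∉ S
  · have := hw j
    simp only at this
    have hvj : v j = A⁻¹ ⟨j, hjS⟩ k' / A⁻¹ k' k' := by
      simp only [hvdef]; rw [dif_pos hjS]
    rw [indInf, dif_pos ⟨hk, hjS⟩]
    calc (A⁻¹ ⟨j, hjS⟩ ⟨k, hk⟩ : ℝ) / A⁻¹ ⟨k, hk⟩ ⟨k, hk⟩ = v j := by rw [hvj]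
    _ ≤ u j := by linarith
    _ = Γ⁻¹ j k / Γ⁻¹ k k := rfl
  · rw [indInf, dif_neg (fun h => hjS h.2)]
    exact div_nonneg (hGnn j k) (le_of_lt hGkk)
end

section
/- Monotonicity of independent influence in the seed set: if S₁ ⊆ S₂ and k ∉ S₂, then for every node j, f_{kj}^{(S₂)} ≤ f_{kj}^{(S₁)}. -/
open Finset Matrix

variable {ι : Type*} [Fintype ι] [DecidableEq ι]

/-- A strictly row-diagonally dominant matrix with nonpositive off-diagonal entries
(an M-matrix criterion). -/
def GoodM (A : Matrix ι ι ℝ) : Prop :=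
  (∀ i j, i ≠ j → A i j ≤ 0) ∧ ∀ i, 0 < ∑ j, A i j

theorem GoodM.rowsum_le_diag {A : Matrix ι ι ℝ} (hA : GoodM A) (i : ι) :
    ∑ j, A i j ≤ A i i := by
  rw [← Finset.add_sum_erase _ _ (mem_univ i)]
  have : ∑ j ∈ univ.erase i, A i j ≤ 0 :=
    Finset.sum_nonpos fun j hj => hA.1 i j (Finset.ne_of_mem_erase hj).symm
  linarith

theorem GoodM.diag_pos {A : Matrix ι ι ℝ} (hA : GoodM A) (i : ι) : 0 < A i i :=
  lt_of_lt_of_le (hA.2 i) (hA.rowsum_le_diag i)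

theorem GoodM.isUnit {A : Matrix ι ι ℝ} (hA : GoodM A) : IsUnit A := by
  rw [← Matrix.mulVec_injective_iff_isUnit]
  have key : ∀ z : ι → ℝ, A.mulVec z = 0 → z = 0 := by
    intro z hz
    by_contra hz0
    obtain ⟨i1, hi1⟩ : ∃ i, z i ≠ 0 := Function.ne_iff.mp hz0
    obtain ⟨i₀, -, hmax⟩ := Finset.exists_max_image Finset.univ (fun i => |z i|) ⟨i1, mem_univ i1⟩
    have hz0' : 0 < |z i₀| := lt_of_lt_of_le (abs_pos.mpr hi1) (hmax i1 (mem_univ i1))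
    have h0 : ∑ j, A i₀ j * z j = 0 := by
      have := congrFun hz i₀
      simpa [Matrix.mulVec, dotProduct] using this
    have hsplit : A i₀ i₀ * z i₀ = -∑ j ∈ univ.erase i₀, A i₀ j * z j := by
      rw [eq_neg_iff_add_eq_zero, Finset.add_sum_erase _ (fun j => A i₀ j * z j) (mem_univ i₀)]
      exact h0
    have habs : A i₀ i₀ * |z i₀| ≤ |z i₀| * (A i₀ i₀ - ∑ j, A i₀ j) := by
      calc A i₀ i₀ * |z i₀| = |A i₀ i₀ * z i₀| := by
            rw [abs_mul, abs_of_nonneg (le_of_lt (hA.diag_pos i₀))]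
        _ = |∑ j ∈ univ.erase i₀, A i₀ j * z j| := by rw [hsplit, abs_neg]
        _ ≤ ∑ j ∈ univ.erase i₀, |A i₀ j * z j| := Finset.abs_sum_le_sum_abs _ _
        _ ≤ ∑ j ∈ univ.erase i₀, (-A i₀ j) * |z i₀| := by
            apply Finset.sum_le_sum
            intro j hj
            rw [abs_mul, abs_of_nonpos (hA.1 i₀ j (Finset.ne_of_mem_erase hj).symm)]
            exact mul_le_mul_of_nonneg_left (hmax j (mem_univ j)) (neg_nonneg.mpr (hA.1 i₀ j (Finset.ne_of_mem_erase hj).symm))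
        _ = (∑ j ∈ univ.erase i₀, -A i₀ j) * |z i₀| := by rw [Finset.sum_mul]
        _ = |z i₀| * (A i₀ i₀ - ∑ j, A i₀ j) := by
            rw [← Finset.add_sum_erase _ (fun j => A i₀ j) (mem_univ i₀), Finset.sum_neg_distrib]
            ring
    nlinarith [hA.2 i₀]
  intro x y hxy
  have : A.mulVec (x - y) = 0 := by
    rw [Matrix.mulVec_sub, hxy, sub_self]
  have := key _ this
  funext i; have := congrFun this i; simpa [sub_eq_zero] using this

theorem GoodM.isUnit_det {A : Matrix ι ι ℝ} (hA : GoodM A) : IsUnit A.det :=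
  (Matrix.isUnit_iff_isUnit_det A).mp hA.isUnit

theorem GoodM.inv_nonneg {A : Matrix ι ι ℝ} (hA : GoodM A) (i j : ι) : 0 ≤ A⁻¹ i j := by
  set C := A⁻¹ with hC
  have hAC : A * C = 1 := Matrix.mul_nonsing_inv A hA.isUnit_det
  by_contra hneg
  push_neg at hneg
  obtain ⟨i₀, -, hmin⟩ := Finset.exists_min_image Finset.univ (fun i => C i j) ⟨i, mem_univ i⟩
  have hc : C i₀ j < 0 := lt_of_le_of_lt (hmin i (mem_univ i)) hneg
  have h0 : ∑ k, A i₀ k * C k j = (1 : Matrix ι ι ℝ) i₀ j := by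
    rw [← Matrix.mul_apply, hAC]
  have hsplit : A i₀ i₀ * C i₀ j = (1 : Matrix ι ι ℝ) i₀ j - ∑ k ∈ univ.erase i₀, A i₀ k * C k j := by
    rw [eq_sub_iff_add_eq, Finset.add_sum_erase _ (fun k => A i₀ k * C k j) (mem_univ i₀)]
    exact h0
  have hone : (0:ℝ) ≤ (1 : Matrix ι ι ℝ) i₀ j := by
    rw [Matrix.one_apply]; split <;> norm_num
  have hstep : A i₀ i₀ * C i₀ j ≥ (A i₀ i₀ - ∑ k, A i₀ k) * C i₀ j := by
    have h1 : ∑ k ∈ univ.erase i₀, A i₀ k * C k j ≤ ∑ k ∈ univ.erase i₀, A i₀ k * C i₀ j := by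
      apply Finset.sum_le_sum
      intro k hk
      have hak : A i₀ k ≤ 0 := hA.1 i₀ k (Finset.ne_of_mem_erase hk).symm
      nlinarith [hmin k (mem_univ k)]
    have h2 : ∑ k ∈ univ.erase i₀, A i₀ k * C i₀ j = (∑ k, A i₀ k - A i₀ i₀) * C i₀ j := by
      rw [← Finset.sum_mul, Finset.sum_erase_eq_sub (mem_univ i₀)]
    nlinarith
  nlinarith [hA.2 i₀]

theorem GoodM.inv_diag_pos {A : Matrix ι ι ℝ} (hA : GoodM A) (i : ι) : 0 < A⁻¹ i i := by
  set C := A⁻¹ with hC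
  have hAC : A * C = 1 := Matrix.mul_nonsing_inv A hA.isUnit_det
  have h0 : ∑ k, A i k * C k i = 1 := by
    rw [← Matrix.mul_apply, hAC, Matrix.one_apply_eq]
  have hsplit : A i i * C i i = 1 - ∑ k ∈ univ.erase i, A i k * C k i := by
    rw [eq_sub_iff_add_eq, Finset.add_sum_erase _ (fun k => A i k * C k i) (mem_univ i)]
    exact h0
  have h1 : ∑ k ∈ univ.erase i, A i k * C k i ≤ 0 := by
    apply Finset.sum_nonpos
    intro k hk
    exact mul_nonpos_of_nonpos_of_nonneg (hA.1 i k (Finset.ne_of_mem_erase hk).symm)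
      (hA.inv_nonneg k i)
  have h2 : 0 < A i i * C i i := by linarith
  by_contra hcon
  push_neg at hcon
  nlinarith [hA.diag_pos i]

theorem GoodM.submatrix {κ : Type*} [Fintype κ] [DecidableEq κ] {A : Matrix ι ι ℝ}
    (hA : GoodM A) {f : κ → ι} (hf : Function.Injective f) : GoodM (A.submatrix f f) := by
  constructor
  · intro i j hij
    exact hA.1 (f i) (f j) (fun h => hij (hf h))
  · intro i
    have h1 : ∑ j, A.submatrix f f i j = ∑ j ∈ univ.image f, A (f i) j := by
      rw [Finset.sum_image (fun a _ b _ h => hf h)]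
      rfl
    have h2 : ∑ j ∈ univ \ univ.image f, A (f i) j ≤ 0 := by
      apply Finset.sum_nonpos
      intro j hj
      apply hA.1
      intro h
      rw [← h] at hj
      exact (Finset.mem_sdiff.mp hj).2 (Finset.mem_image_of_mem f (mem_univ i))
    have h3 := Finset.sum_sdiff (Finset.subset_univ (univ.image f)) (f := fun j => A (f i) j)
    have := hA.2 (f i)
    rw [h1]
    linarith

/-- Quotient identity: inverse of the principal submatrix deleting index `b`. -/
theorem inv_erase_apply (A : Matrix ι ι ℝ) (hA : IsUnit A.det) (b : ι)
    (hbb : A⁻¹ b b ≠ 0) (j k : {i : ι // i ≠ b}) :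
    (A.submatrix (Subtype.val : {i : ι // i ≠ b} → ι) Subtype.val)⁻¹ j k
      = A⁻¹ j.val k.val - A⁻¹ j.val b * A⁻¹ b k.val / A⁻¹ b b := by
  set M := A⁻¹ with hM
  set N : Matrix {i : ι // i ≠ b} {i : ι // i ≠ b} ℝ :=
    fun j k => M j.val k.val - M j.val b * M b k.val / M b b with hN
  have hMA : M * A = 1 := Matrix.nonsing_inv_mul A hA
  have hleft : N * A.submatrix (Subtype.val : {i : ι // i ≠ b} → ι) (Subtype.val : {i : ι // i ≠ b} → ι) = 1 := by
    ext j l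
    rw [Matrix.mul_apply]
    simp only [Matrix.submatrix_apply]
    have hsub := Finset.sum_subtype (p := fun i => i ≠ b) (F := inferInstance) (univ.erase b) (by simp)
      (fun k => (M j.val k - M j.val b * M b k / M b b) * A k l.val)
    simp only [hN]
    rw [← hsub, Finset.sum_erase_eq_sub (mem_univ b)]
    have hzero : (M j.val b - M j.val b * M b b / M b b) * A b l.val = 0 := by
      rw [mul_div_assoc, div_self hbb, mul_one, sub_self, zero_mul]
    rw [hzero, sub_zero]
    have hfull : ∑ k, (M j.val k - M j.val b * M b k / M b b) * A k l.val
        = (M * A) j.val l.val - (M j.val b / M b b) * (M * A) b l.val := by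
      simp only [Matrix.mul_apply, Finset.mul_sum, ← Finset.sum_sub_distrib]
      apply Finset.sum_congr rfl
      intro k _
      ring
    rw [hfull, hMA]
    have hbl : (1 : Matrix ι ι ℝ) b l.val = 0 := Matrix.one_apply_ne (Ne.symm l.prop)
    rw [hbl, mul_zero, sub_zero, Matrix.one_apply, Matrix.one_apply]
    simp [Subtype.ext_iff]
  rw [Matrix.inv_eq_left_inv hleft]

/-- One-step monotonicity of the normalized inverse entries when deleting index `b`. -/
theorem ratio_le (A : Matrix ι ι ℝ) (hA : GoodM A) (b : ι) (j k : {i : ι // i ≠ b}) :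
    (A.submatrix (Subtype.val : {i : ι // i ≠ b} → ι) Subtype.val)⁻¹ j k
      / (A.submatrix (Subtype.val : {i : ι // i ≠ b} → ι) Subtype.val)⁻¹ k k
      ≤ A⁻¹ j.val k.val / A⁻¹ k.val k.val := by
  set M := A⁻¹ with hM
  have hA' : GoodM (A.submatrix (Subtype.val : {i : ι // i ≠ b} → ι) Subtype.val) :=
    hA.submatrix Subtype.val_injective
  have hdet := hA.isUnit_det
  have hbb : 0 < M b b := hA.inv_diag_pos b
  have hkk : 0 < M k.val k.val := hA.inv_diag_pos k.val
  rcases eq_or_ne j k with rfl | hjk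
  · rw [div_self (ne_of_gt (hA'.inv_diag_pos j)), div_self (ne_of_gt hkk)]
  -- main case
  have hjval : j.val ≠ k.val := fun h => hjk (Subtype.ext h)
  -- key inequality from deleting k: M j b * M k k - M j k * M k b ≥ 0
  have hkey : 0 ≤ M j.val b * M k.val k.val - M j.val k.val * M k.val b := by
    have hA'' : GoodM (A.submatrix (Subtype.val : {i : ι // i ≠ k.val} → ι) Subtype.val) :=
      hA.submatrix Subtype.val_injective
    have h1 := hA''.inv_nonneg ⟨j.val, hjval⟩ ⟨b, Ne.symm k.prop⟩
    rw [inv_erase_apply A hdet k.val (ne_of_gt hkk) ⟨j.val, hjval⟩ ⟨b, Ne.symm k.prop⟩] at h1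
    have := mul_nonneg h1 (le_of_lt hkk)
    calc (0:ℝ) ≤ (M j.val b - M j.val k.val * M k.val b / M k.val k.val) * M k.val k.val := this
      _ = M j.val b * M k.val k.val - M j.val k.val * M k.val b := by field_simp
  have hq : 0 ≤ M b k.val := hA.inv_nonneg b k.val
  have hden : 0 < (A.submatrix (Subtype.val : {i : ι // i ≠ b} → ι) Subtype.val)⁻¹ k k :=
    hA'.inv_diag_pos k
  rw [inv_erase_apply A hdet b (ne_of_gt hbb) j k, inv_erase_apply A hdet b (ne_of_gt hbb) k k]
  rw [inv_erase_apply A hdet b (ne_of_gt hbb) k k] at hden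
  rw [div_le_div_iff₀ hden hkk]
  have h2 : M j.val k.val * (M k.val b * M b k.val) ≤ M j.val b * M b k.val * M k.val k.val := by
    nlinarith
  have h3 : M j.val k.val * (M k.val b * M b k.val) / M b b
      ≤ M j.val b * M b k.val * M k.val k.val / M b b :=
    div_le_div_of_nonneg_right h2 (le_of_lt hbb)
  ring_nf
  ring_nf at h3
  linarith

theorem indInf_nonneg {n : ℕ} {Γ : Matrix (Fin n) (Fin n) ℝ} (hΓ : GoodM Γ)
    (S : Finset (Fin n)) (k j : Fin n) : 0 ≤ indInf Γ S k j := by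
  unfold indInf
  split
  · next h =>
    have hG : GoodM (Γ.submatrix (Subtype.val : {i : Fin n // i ∉ S} → Fin n) Subtype.val) :=
      hΓ.submatrix Subtype.val_injective
    exact div_nonneg (hG.inv_nonneg _ _) (le_of_lt (hG.inv_diag_pos _))
  · exact le_refl 0

theorem indInf_insert_le {n : ℕ} {Γ : Matrix (Fin n) (Fin n) ℝ} (hΓ : GoodM Γ)
    (S : Finset (Fin n)) (b k : Fin n) (hk : k ∉ insert b S) :
    ∀ j, indInf Γ (insert b S) k j ≤ indInf Γ S k j := by
  intro j
  by_cases hbS : b ∈ S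
  · rw [Finset.insert_eq_self.mpr hbS]
  have hkS : k ∉ S := fun h => hk (Finset.mem_insert_of_mem h)
  have hkb : k ≠ b := fun h => hk (h ▸ Finset.mem_insert_self b S)
  by_cases hj : j ∈ insert b S
  · have hLHS : indInf Γ (insert b S) k j = 0 := by
      unfold indInf
      exact dif_neg (fun h => h.2 hj)
    rw [hLHS]
    exact indInf_nonneg hΓ S k j
  -- main case : j ∉ insert b S
  have hjS : j ∉ S := fun h => hj (Finset.mem_insert_of_mem h)
  have hjb : j ≠ b := fun h => hj (h ▸ Finset.mem_insert_self b S)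
  set A := Γ.submatrix (Subtype.val : {i : Fin n // i ∉ S} → Fin n) Subtype.val with hAdef
  have hAgood : GoodM A := hΓ.submatrix Subtype.val_injective
  set b' : {i : Fin n // i ∉ S} := ⟨b, hbS⟩ with hb'
  -- the equivalence between the two index types
  let e : {i : Fin n // i ∉ insert b S} ≃ {x : {i : Fin n // i ∉ S} // x ≠ b'} :=
    { toFun := fun i => ⟨⟨i.val, fun h => i.prop (Finset.mem_insert_of_mem h)⟩,
        fun h => i.prop (by rw [Subtype.ext_iff] at h; simp at h; rw [h]; exact Finset.mem_insert_self b S)⟩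
      invFun := fun x => ⟨x.val.val, by
        intro hm
        rcases Finset.mem_insert.mp hm with h | h
        · exact x.prop (Subtype.ext h)
        · exact x.val.prop h⟩
      left_inv := fun i => rfl
      right_inv := fun x => rfl }
  have hsub : Γ.submatrix (Subtype.val : {i : Fin n // i ∉ insert b S} → Fin n) Subtype.val
      = (A.submatrix (Subtype.val : {x : {i : Fin n // i ∉ S} // x ≠ b'} → {i : Fin n // i ∉ S}) Subtype.val).submatrix e e := by
    ext x y; rfl
  unfold indInf
  rw [dif_pos ⟨hk, hj⟩, dif_pos ⟨hkS, hjS⟩]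
  rw [hsub, Matrix.inv_submatrix_equiv]
  simp only [Matrix.submatrix_apply]
  exact ratio_le A hAgood b' (e ⟨j, hj⟩) (e ⟨k, hk⟩)

theorem goodM_gamma {n : ℕ} (T : Matrix (Fin n) (Fin n) ℝ) (lam : Fin n → ℝ)
    (hT : ∀ i j, 0 ≤ T i j) (hcol : ∀ i, (∑ j, T j i) ≤ 1)
    (hlam : ∀ i, 0 < lam i) : GoodM (1 + Matrix.diagonal lam - Tᵀ) := by
  constructor
  · intro i j hij
    simp [Matrix.sub_apply, Matrix.add_apply, Matrix.one_apply_ne hij,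
      Matrix.diagonal_apply_ne _ hij, Matrix.transpose_apply]
    exact hT j i
  · intro i
    have : ∑ j, (1 + Matrix.diagonal lam - Tᵀ) i j
        = (∑ j, (1 : Matrix (Fin n) (Fin n) ℝ) i j) + (∑ j, Matrix.diagonal lam i j)
          - ∑ j, T j i := by
      simp [Matrix.sub_apply, Matrix.add_apply, Finset.sum_add_distrib, Finset.sum_sub_distrib,
        Matrix.transpose_apply]
    rw [this]
    have h1 : ∑ j, (1 : Matrix (Fin n) (Fin n) ℝ) i j = 1 := by
      simp [Matrix.one_apply]
    have h2 : ∑ j, Matrix.diagonal lam i j = lam i := by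
      simp [Matrix.diagonal_apply]
    rw [h1, h2]
    have := hcol i
    have := hlam i
    linarith

/-- Monotonicity of independent influence in the seed set: if `S₁ ⊆ S₂` and `k ∉ S₂`,
then `f_{kj}^{(S₂)} ≤ f_{kj}^{(S₁)}` for every node `j`. -/
theorem stmt_8 (n : ℕ) (T : Matrix (Fin n) (Fin n) ℝ) (lam : Fin n → ℝ)
    (hT : ∀ i j, 0 ≤ T i j) (hcol : ∀ i, (∑ j, T j i) ≤ 1)
    (hlam : ∀ i, 0 < lam i)
    (S₁ S₂ : Finset (Fin n)) (hS : S₁ ⊆ S₂) (k : Fin n) (hk : k ∉ S₂) :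
    ∀ j, indInf (1 + Matrix.diagonal lam - Tᵀ) S₂ k j ≤
      indInf (1 + Matrix.diagonal lam - Tᵀ) S₁ k j := by
  have hΓ := goodM_gamma T lam hT hcol hlam
  set Γ := 1 + Matrix.diagonal lam - Tᵀ with hΓdef
  have key : ∀ Δ : Finset (Fin n), k ∉ S₁ ∪ Δ →
      ∀ j, indInf Γ (S₁ ∪ Δ) k j ≤ indInf Γ S₁ k j := by
    intro Δ
    induction Δ using Finset.induction_on with
    | empty => intro _ j; rw [Finset.union_empty]
    | @insert b Δ hbΔ ih =>
      intro hk' j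
      rw [Finset.union_insert]
      rw [Finset.union_insert] at hk'
      have hk'' : k ∉ S₁ ∪ Δ := fun h => hk' (Finset.mem_insert_of_mem h)
      exact le_trans (indInf_insert_le hΓ (S₁ ∪ Δ) b k hk' j) (ih hk'' j)
  have hunion : S₁ ∪ S₂ = S₂ := Finset.union_eq_right.mpr hS
  intro j
  have := key S₂ (by rw [hunion]; exact hk) j
  rwa [hunion] at this
end

section
/- Submodularity of the influence spread: if for all seed sets S₁ ⊆ S₂ and node s ∉ S₂ one has f_{sj}^{(S₁)} ≥ f_{sj}^{(S₂)} and f_{S₁j} ≤ f_{S₂j} for every j, and all quantities lie in [0,1], then σ(S₁ ∪ {s}) − σ(S₁) ≥ σ(S₂ ∪ {s}) − σ(S₂), where σ(S) = Σ_j f_{Sj} and f_{(S∪{s})j} = 1 − (1 − f_{Sj})(1 − f_{sj}^{(S)}). -/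
open Finset

/-- Submodularity of the influence spread: under antitonicity of independent influence,
monotonicity of joint influence, and the update rule
`f_{(S∪{s})j} = 1 − (1 − f_{Sj})(1 − f_{sj}^{(S)})`, the spread `σ(S) = ∑_j f_{Sj}`
satisfies `σ(S₁ ∪ {s}) − σ(S₁) ≥ σ(S₂ ∪ {s}) − σ(S₂)` for `S₁ ⊆ S₂`, `s ∉ S₂`. -/
theorem stmt_12 (n : ℕ)
    (F : Finset (Fin n) → Fin n → ℝ)  -- joint influence f_{Sj}
    (g : Fin n → Finset (Fin n) → Fin n → ℝ)  -- independent influence f_{sj}^{(S)}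
    (hFrange : ∀ S j, 0 ≤ F S j ∧ F S j ≤ 1)
    (hgrange : ∀ s S j, s ∉ S → 0 ≤ g s S j ∧ g s S j ≤ 1)
    (hupd : ∀ (S : Finset (Fin n)) (s : Fin n) (j : Fin n), s ∉ S →
      F (insert s S) j = 1 - (1 - F S j) * (1 - g s S j))
    (hanti : ∀ (s : Fin n) (S₁ S₂ : Finset (Fin n)) (j : Fin n),
      S₁ ⊆ S₂ → s ∉ S₂ → g s S₂ j ≤ g s S₁ j)
    (hmono : ∀ (S₁ S₂ : Finset (Fin n)) (j : Fin n), S₁ ⊆ S₂ → F S₁ j ≤ F S₂ j) :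
    ∀ (S₁ S₂ : Finset (Fin n)) (s : Fin n), S₁ ⊆ S₂ → s ∉ S₂ →
      (∑ j, F (insert s S₂) j) - (∑ j, F S₂ j) ≤
        (∑ j, F (insert s S₁) j) - (∑ j, F S₁ j) := by
  intro S₁ S₂ s hsub hs
  have hs1 : s ∉ S₁ := fun h => hs (hsub h)
  rw [← Finset.sum_sub_distrib, ← Finset.sum_sub_distrib]
  apply Finset.sum_le_sum
  intro j _
  rw [hupd S₂ s j hs, hupd S₁ s j hs1]
  have e2 : 1 - (1 - F S₂ j) * (1 - g s S₂ j) - F S₂ j = (1 - F S₂ j) * g s S₂ j := by ring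
  have e1 : 1 - (1 - F S₁ j) * (1 - g s S₁ j) - F S₁ j = (1 - F S₁ j) * g s S₁ j := by ring
  rw [e1, e2]
  apply mul_le_mul
  · linarith [hmono S₁ S₂ j hsub]
  · exact hanti s S₁ S₂ j hsub hs
  · exact (hgrange s S₂ j hs).1
  · linarith [(hFrange S₁ j).2]
end
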